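/- (AdaGrad-Diagonal regret bound.) Let X ⊆ ℝ^d be a nonempty compact convex set whose diameter is at most D, let x* ∈ X, let η > 0, and let g^(1), …, g^(T) ∈ ℝ^d. For each coordinate k set a_t(k) = √(∑_{s=1}^t (g^(s)(k))²), and for a vector v define ‖v‖²_{A_t} = ∑_{k=1}^d a_t(k) v(k)². Suppose x^(1) ∈ X and x^(2), …, x^(T) ∈ X satisfy, for every 1 ≤ t ≤ T−1, ‖x^(t+1) − x*‖_{A_t} ≤ ‖z^(t) − x*‖_{A_t}, where z^(t) ∈ ℝ^d is defined coordinatewise by z^(t)(k) = x^(t)(k) − η g^(t)(k)/a_t(k) (with x/0 = 0); this holds in particular when x^(t+1) is the projection of z^(t) onto X in the ‖·‖_{A_t} norm. Then ∑_{t=1}^T ⟨g^(t), x^(t) − x*⟩ ≤ √d (η + D²/(2η)) √(∑_{t=1}^T ‖g^(t)‖²). -/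

import Mathlib

lemma aux_sum_div (b : ℕ → ℝ) (hb : ∀ t, 0 ≤ b t) (n : ℕ) :
    ∑ t ∈ Finset.Icc 1 n, b t / Real.sqrt (∑ s ∈ Finset.Icc 1 t, b s)
      ≤ 2 * Real.sqrt (∑ s ∈ Finset.Icc 1 n, b s) := by
  induction n with
  | zero => simp
  | succ n ih =>
    rw [Finset.sum_Icc_succ_top (by omega), Finset.sum_Icc_succ_top (by omega : 1 ≤ n + 1)]
    set S := ∑ s ∈ Finset.Icc 1 n, b s with hS
    have hS0 : 0 ≤ S := Finset.sum_nonneg fun i _ => hb i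
    set A := Real.sqrt S with hA
    set B := Real.sqrt (S + b (n + 1)) with hB
    have hA0 : 0 ≤ A := Real.sqrt_nonneg _
    have hB0 : 0 ≤ B := Real.sqrt_nonneg _
    have hAB : A ≤ B := Real.sqrt_le_sqrt (by linarith [hb (n+1)])
    rcases eq_or_lt_of_le hB0 with h | h
    · have h2 := Real.sq_sqrt (show (0:ℝ) ≤ S + b (n+1) by linarith [hb (n+1)])
      rw [← hB, ← h] at h2
      have hb1 : b (n+1) = 0 := by nlinarith [hb (n+1)]
      have hAz : A = 0 := le_antisymm (hAB.trans h.symm.le) hA0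
      simp only [hb1, hAz, zero_div, add_zero] at *
      linarith [ih]
    · have hBsq : B ^ 2 = S + b (n + 1) := Real.sq_sqrt (by linarith [hb (n+1)])
      have hAsq : A ^ 2 = S := Real.sq_sqrt hS0
      have : b (n+1) / B ≤ 2 * (B - A) := by
        rw [div_le_iff₀ h]
        nlinarith
      linarith [ih]

theorem stmt_14 (d T : ℕ) (hT : 1 ≤ T) (D η : ℝ) (hη : 0 < η)
    (X : Set (EuclideanSpace ℝ (Fin d))) (hXne : X.Nonempty)
    (hXcomp : IsCompact X) (hXconv : Convex ℝ X)
    (hdiam : ∀ x ∈ X, ∀ y ∈ X, ‖x - y‖ ≤ D)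
    (xstar : EuclideanSpace ℝ (Fin d)) (hxstar : xstar ∈ X)
    (g : ℕ → EuclideanSpace ℝ (Fin d))
    (a : ℕ → Fin d → ℝ)
    (ha : ∀ t k, a t k = Real.sqrt (∑ s ∈ Finset.Icc 1 t, (g s k) ^ 2))
    (x : ℕ → EuclideanSpace ℝ (Fin d))
    (hxX : ∀ t ∈ Finset.Icc 1 T, x t ∈ X)
    (hstep : ∀ t ∈ Finset.Icc 1 (T - 1),
        Real.sqrt (∑ k : Fin d, a t k * (x (t + 1) k - xstar k) ^ 2)
          ≤ Real.sqrt (∑ k : Fin d,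
              a t k * ((x t k - η * g t k / a t k) - xstar k) ^ 2)) :
    ∑ t ∈ Finset.Icc 1 T, (inner ℝ (g t) (x t - xstar) : ℝ)
      ≤ Real.sqrt d * (η + D ^ 2 / (2 * η))
          * Real.sqrt (∑ t ∈ Finset.Icc 1 T, ‖g t‖ ^ 2) := by
  obtain ⟨T', rfl⟩ : ∃ T', T = T' + 1 := ⟨T - 1, by omega⟩
  have ha0 : ∀ t k, 0 ≤ a t k := fun t k => (ha t k) ▸ Real.sqrt_nonneg _
  have hamono : ∀ t k, a t k ≤ a (t + 1) k := by
    intro t k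
    rw [ha, ha]
    apply Real.sqrt_le_sqrt
    apply Finset.sum_le_sum_of_subset_of_nonneg
    · exact Finset.Icc_subset_Icc_right (by omega)
    · intro i _ _; positivity
  have hgz : ∀ t k, 1 ≤ t → a t k = 0 → g t k = 0 := by
    intro t k ht h0
    rw [ha] at h0
    have hsum : ∑ s ∈ Finset.Icc 1 t, (g s k) ^ 2 = 0 := by
      have := Real.sqrt_eq_zero'.mp h0
      have h2 : (0:ℝ) ≤ ∑ s ∈ Finset.Icc 1 t, (g s k) ^ 2 :=
        Finset.sum_nonneg fun i _ => sq_nonneg _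
      linarith
    have := (Finset.sum_eq_zero_iff_of_nonneg (fun i _ => sq_nonneg (g i k))).mp hsum
      t (by simp [Finset.mem_Icc]; omega)
    exact pow_eq_zero_iff (by norm_num) |>.mp this
  -- named auxiliary sequences
  obtain ⟨S, hS⟩ : ∃ S : ℕ → ℝ, ∀ t, S t = ∑ k : Fin d, a t k * (x t k - xstar k) ^ 2 :=
    ⟨_, fun _ => rfl⟩
  obtain ⟨P, hP⟩ : ∃ P : ℕ → ℝ, ∀ t, P t = ∑ k : Fin d, a t k * (x (t+1) k - xstar k) ^ 2 :=
    ⟨_, fun _ => rfl⟩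
  obtain ⟨Z, hZ⟩ : ∃ Z : ℕ → ℝ, ∀ t,
      Z t = ∑ k : Fin d, a t k * ((x t k - η * g t k / a t k) - xstar k) ^ 2 :=
    ⟨_, fun _ => rfl⟩
  obtain ⟨Q, hQ⟩ : ∃ Q : ℕ → ℝ, ∀ t, Q t = ∑ k : Fin d, (g t k) ^ 2 / a t k :=
    ⟨_, fun _ => rfl⟩
  obtain ⟨W, hW⟩ : ∃ W : ℕ → ℝ, ∀ t, W t = ∑ k : Fin d, g t k * (x t k - xstar k) :=
    ⟨_, fun _ => rfl⟩
  obtain ⟨A, hA⟩ : ∃ A : ℕ → ℝ, ∀ t, A t = ∑ k : Fin d, a t k := ⟨_, fun _ => rfl⟩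
  have hS0 : ∀ t, 0 ≤ S t := fun t => (hS t) ▸
    Finset.sum_nonneg fun k _ => mul_nonneg (ha0 t k) (sq_nonneg _)
  have hP0 : ∀ t, 0 ≤ P t := fun t => (hP t) ▸
    Finset.sum_nonneg fun k _ => mul_nonneg (ha0 t k) (sq_nonneg _)
  have hZ0 : ∀ t, 0 ≤ Z t := fun t => (hZ t) ▸
    Finset.sum_nonneg fun k _ => mul_nonneg (ha0 t k) (sq_nonneg _)
  have hA0 : ∀ t, 0 ≤ A t := fun t => (hA t) ▸ Finset.sum_nonneg fun k _ => ha0 t k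
  -- the inner product in coordinates
  have hinner : ∀ t, (inner ℝ (g t) (x t - xstar) : ℝ) = W t := by
    intro t
    rw [hW]
    simp [PiLp.inner_apply, RCLike.inner_apply, PiLp.sub_apply, mul_comm]
  -- squared coordinate distance bound
  have hD0 : 0 ≤ D := by
    obtain ⟨u, hu⟩ := hXne
    simpa using hdiam u hu u hu
  have hsqD : ∀ u ∈ X, ∀ k : Fin d, (u k - xstar k) ^ 2 ≤ D ^ 2 := by
    intro u hu k
    have h1 : ‖u - xstar‖ ≤ D := hdiam u hu xstar hxstar
    have h2 : ‖u - xstar‖ ^ 2 = ∑ j : Fin d, (u j - xstar j) ^ 2 := by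
      rw [EuclideanSpace.norm_eq, Real.sq_sqrt (Finset.sum_nonneg fun j _ => sq_nonneg _)]
      refine Finset.sum_congr rfl fun j _ => ?_
      simp [Real.norm_eq_abs, sq_abs, PiLp.sub_apply]
    have h3 : (u k - xstar k) ^ 2 ≤ ∑ j : Fin d, (u j - xstar j) ^ 2 :=
      Finset.single_le_sum (f := fun j => (u j - xstar j) ^ 2)
        (fun j _ => sq_nonneg _) (Finset.mem_univ k)
    calc (u k - xstar k) ^ 2 ≤ ‖u - xstar‖ ^ 2 := by rw [h2]; exact h3
      _ ≤ D ^ 2 := by nlinarith [norm_nonneg (u - xstar)]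
  -- key per-step identity
  have hid : ∀ t, 1 ≤ t → Z t = S t - 2 * η * W t + η ^ 2 * Q t := by
    intro t ht
    rw [hZ, hS, hW, hQ, Finset.mul_sum, Finset.mul_sum, ← Finset.sum_sub_distrib,
      ← Finset.sum_add_distrib]
    apply Finset.sum_congr rfl
    intro k _
    rcases eq_or_lt_of_le (ha0 t k) with h | h
    · have hg := hgz t k ht h.symm
      simp [← h, hg]
    · field_simp
      ring
  -- step inequality for t ≤ T'
  have hPZ : ∀ t ∈ Finset.Icc 1 T', P t ≤ Z t := by
    intro t htm
    have h := hstep t (by simpa using htm)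
    rw [← hP, ← hZ] at h
    exact (Real.sqrt_le_sqrt_iff (hZ0 t)).mp h
  -- per-step regret inequality
  have hreg : ∀ t ∈ Finset.Icc 1 T', 2 * η * W t ≤ S t - P t + η ^ 2 * Q t := by
    intro t htm
    have ht1 : 1 ≤ t := (Finset.mem_Icc.mp htm).1
    have := hid t ht1
    have := hPZ t htm
    linarith
  have hregT : 2 * η * W (T' + 1) ≤ S (T' + 1) + η ^ 2 * Q (T' + 1) := by
    have := hid (T' + 1) (by omega)
    have := hZ0 (T' + 1)
    linarith
  -- telescoping identities
  have htel : ∀ f : ℕ → ℝ, ∑ t ∈ Finset.Icc 1 T', (f t - f (t + 1)) = f 1 - f (T' + 1) := by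
    intro f
    rw [← Finset.Ico_add_one_right_eq_Icc, Finset.sum_Ico_eq_sum_range]
    have := Finset.sum_range_sub' (fun i => f (1 + i)) T'
    simpa [Nat.add_comm] using this
  -- telescoped potential bound
  have hSP : ∀ t ∈ Finset.Icc 1 T', S (t + 1) - P t ≤ D ^ 2 * (A (t + 1) - A t) := by
    intro t htm
    have htm2 : t + 1 ∈ Finset.Icc 1 (T' + 1) := by
      simp [Finset.mem_Icc] at htm ⊢; omega
    have hx1 := hxX (t + 1) htm2
    have h1 : ∀ k : Fin d, (a (t+1) k - a t k) * (x (t+1) k - xstar k) ^ 2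
        ≤ (a (t+1) k - a t k) * D ^ 2 := fun k =>
      mul_le_mul_of_nonneg_left (hsqD _ hx1 k) (by linarith [hamono t k])
    have h2 := Finset.sum_le_sum (fun k (_ : k ∈ Finset.univ) => h1 k)
    simp only [sub_mul, Finset.sum_sub_distrib] at h2
    rw [← Finset.sum_mul, ← Finset.sum_mul] at h2
    rw [hS, hP, hA, hA]
    linarith [h2]
  have hS1 : S 1 ≤ D ^ 2 * A 1 := by
    have hx1 := hxX 1 (by simp)
    rw [hS, hA, Finset.mul_sum]
    apply Finset.sum_le_sum
    intro k _
    calc a 1 k * (x 1 k - xstar k) ^ 2 ≤ a 1 k * D ^ 2 :=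
          mul_le_mul_of_nonneg_left (hsqD _ hx1 k) (ha0 1 k)
      _ = D ^ 2 * a 1 k := by ring
  have hpot : (∑ t ∈ Finset.Icc 1 T', (S t - P t)) + S (T' + 1) ≤ D ^ 2 * A (T' + 1) := by
    have e1 := htel S
    have e2 := htel A
    have i1 : ∑ t ∈ Finset.Icc 1 T', (S (t+1) - P t)
        ≤ ∑ t ∈ Finset.Icc 1 T', D ^ 2 * (A (t+1) - A t) := Finset.sum_le_sum hSP
    have e3 : ∑ t ∈ Finset.Icc 1 T', (S t - P t)
        = (∑ t ∈ Finset.Icc 1 T', (S t - S (t+1)))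
          + ∑ t ∈ Finset.Icc 1 T', (S (t+1) - P t) := by
      rw [← Finset.sum_add_distrib]; apply Finset.sum_congr rfl; intros; ring
    have e4 : ∑ t ∈ Finset.Icc 1 T', D ^ 2 * (A (t+1) - A t)
        = -(D ^ 2) * ∑ t ∈ Finset.Icc 1 T', (A t - A (t+1)) := by
      rw [Finset.mul_sum]; apply Finset.sum_congr rfl; intros; ring
    rw [e4, e2] at i1
    nlinarith [hS0 (T' + 1), hA0 1]
  -- bound on Q-sum
  have hQsum : ∑ t ∈ Finset.Icc 1 (T' + 1), Q t ≤ 2 * A (T' + 1) := by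
    have : ∑ t ∈ Finset.Icc 1 (T' + 1), Q t
        = ∑ k : Fin d, ∑ t ∈ Finset.Icc 1 (T' + 1), (g t k) ^ 2 / a t k := by
      simp only [hQ]; exact Finset.sum_comm
    rw [this, hA, Finset.mul_sum]
    apply Finset.sum_le_sum
    intro k _
    have h := aux_sum_div (fun s => (g s k) ^ 2) (fun s => sq_nonneg _) (T' + 1)
    simp only [← ha] at h
    exact h
  -- total bound on sum of W
  have hWsum : 2 * η * ∑ t ∈ Finset.Icc 1 (T' + 1), W t
      ≤ D ^ 2 * A (T' + 1) + η ^ 2 * (2 * A (T' + 1)) := by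
    rw [Finset.mul_sum, Finset.sum_Icc_succ_top (by omega : 1 ≤ T' + 1)]
    have i1 : ∑ t ∈ Finset.Icc 1 T', 2 * η * W t
        ≤ ∑ t ∈ Finset.Icc 1 T', (S t - P t + η ^ 2 * Q t) := Finset.sum_le_sum hreg
    have e1 : ∑ t ∈ Finset.Icc 1 T', (S t - P t + η ^ 2 * Q t)
        = (∑ t ∈ Finset.Icc 1 T', (S t - P t)) + η ^ 2 * ∑ t ∈ Finset.Icc 1 T', Q t := by
      rw [Finset.sum_add_distrib, Finset.mul_sum]
    have e2 : ∑ t ∈ Finset.Icc 1 (T' + 1), Q t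
        = (∑ t ∈ Finset.Icc 1 T', Q t) + Q (T' + 1) :=
      Finset.sum_Icc_succ_top (by omega) _
    rw [e1] at i1
    rw [e2] at hQsum
    nlinarith [hpot, hregT]
  -- from W-sum to goal
  have hM0 : 0 ≤ A (T' + 1) := hA0 _
  have hc0 : 0 ≤ η + D ^ 2 / (2 * η) := by positivity
  have hWfin : ∑ t ∈ Finset.Icc 1 (T' + 1), W t
      ≤ (η + D ^ 2 / (2 * η)) * A (T' + 1) := by
    rw [← mul_le_mul_iff_right₀ (by linarith : (0:ℝ) < 2 * η)]
    calc 2 * η * ∑ t ∈ Finset.Icc 1 (T' + 1), W t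
        ≤ D ^ 2 * A (T' + 1) + η ^ 2 * (2 * A (T' + 1)) := hWsum
      _ = 2 * η * ((η + D ^ 2 / (2 * η)) * A (T' + 1)) := by field_simp; ring
  -- Cauchy-Schwarz
  have hnorm : ∀ t, ‖g t‖ ^ 2 = ∑ k : Fin d, (g t k) ^ 2 := by
    intro t
    rw [EuclideanSpace.norm_eq, Real.sq_sqrt (Finset.sum_nonneg fun j _ => sq_nonneg _)]
    refine Finset.sum_congr rfl fun j _ => ?_
    simp [Real.norm_eq_abs, sq_abs]
  have hgsum0 : 0 ≤ ∑ t ∈ Finset.Icc 1 (T' + 1), ‖g t‖ ^ 2 :=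
    Finset.sum_nonneg fun t _ => sq_nonneg _
  have hCS : A (T' + 1) ≤ Real.sqrt d * Real.sqrt (∑ t ∈ Finset.Icc 1 (T' + 1), ‖g t‖ ^ 2) := by
    rw [← Real.sqrt_mul (Nat.cast_nonneg d)]
    rw [Real.le_sqrt hM0 (by positivity)]
    have h1 : (A (T' + 1)) ^ 2 ≤ d * ∑ k : Fin d, (a (T' + 1) k) ^ 2 := by
      rw [hA]
      have := sq_sum_le_card_mul_sum_sq (s := Finset.univ) (f := fun k : Fin d => a (T' + 1) k)
      simpa using this
    have h2 : ∑ k : Fin d, (a (T' + 1) k) ^ 2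
        = ∑ t ∈ Finset.Icc 1 (T' + 1), ‖g t‖ ^ 2 := by
      have : ∀ k : Fin d, (a (T' + 1) k) ^ 2 = ∑ s ∈ Finset.Icc 1 (T' + 1), (g s k) ^ 2 := by
        intro k
        rw [ha, Real.sq_sqrt (Finset.sum_nonneg fun s _ => sq_nonneg _)]
      rw [Finset.sum_congr rfl fun k _ => this k, Finset.sum_comm]
      exact Finset.sum_congr rfl fun t _ => (hnorm t).symm
    rw [← h2]
    exact h1
  calc ∑ t ∈ Finset.Icc 1 (T' + 1), (inner ℝ (g t) (x t - xstar) : ℝ)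
      = ∑ t ∈ Finset.Icc 1 (T' + 1), W t := Finset.sum_congr rfl fun t _ => hinner t
    _ ≤ (η + D ^ 2 / (2 * η)) * A (T' + 1) := hWfin
    _ ≤ (η + D ^ 2 / (2 * η)) * (Real.sqrt d * Real.sqrt (∑ t ∈ Finset.Icc 1 (T' + 1), ‖g t‖ ^ 2)) :=
        mul_le_mul_of_nonneg_left hCS hc0
    _ = Real.sqrt d * (η + D ^ 2 / (2 * η)) * Real.sqrt (∑ t ∈ Finset.Icc 1 (T' + 1), ‖g t‖ ^ 2) := by
        ring
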